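/- arXiv:1003.2944 — 4 statements merged into one kernel-verified Lean document; each statement's English description precedes it below -/
import Mathlib

section
/- Let p = (0,0), q = (0,1), and let a, b, c ∈ ℝ² with b in the convex hull of {a, p_c, c}, where p_c = (0, y_c) is the orthogonal projection of c onto the y-axis and p_a = (0, y_a) that of a. If the y-coordinates satisfy y_a ≤ y_b ≤ y_c, then dist(a,b) + dist(b,c) ≤ dist(a,p_c) + dist(p_c,c). -/
/-- If `b` lies in the convex hull of `{a, p_c, c}` where `p_c = (0, y_c)` is the projection
of `c` onto the `y`-axis, and the `y`-coordinates satisfy `y_a ≤ y_b ≤ y_c`, then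
`dist a b + dist b c ≤ dist a p_c + dist p_c c`. -/
theorem path_through_triangle_le
    (a b c p q p_a p_c : EuclideanSpace ℝ (Fin 2))
    (hp : p = (!₂[0, 0] : EuclideanSpace ℝ (Fin 2)))
    (hq : q = (!₂[0, 1] : EuclideanSpace ℝ (Fin 2)))
    (hpa : p_a = (!₂[0, a 1] : EuclideanSpace ℝ (Fin 2)))
    (hpc : p_c = (!₂[0, c 1] : EuclideanSpace ℝ (Fin 2)))
    (hb : b ∈ convexHull ℝ {a, p_c, c})
    (hy1 : a 1 ≤ b 1) (hy2 : b 1 ≤ c 1) :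
    dist a b + dist b c ≤ dist a p_c + dist p_c c := by
  have hconv : ConvexOn ℝ Set.univ (fun x => dist a x + dist x c) := by
    have h1 := (convexOn_dist a (convex_univ (E := EuclideanSpace ℝ (Fin 2)))).add
      (convexOn_dist c (convex_univ))
    have h2 : (fun x => dist a x + dist x c) = ((fun z' => dist z' a) + fun z' => dist z' c) := by
      funext x
      simp [dist_comm]
    rw [h2]
    exact h1
  obtain ⟨y, hy, hle⟩ := hconv.exists_ge_of_mem_convexHull (Set.subset_univ _) hb
  rcases hy with h | h | h <;> rw [h] at hle
  · calc dist a b + dist b c ≤ dist a a + dist a c := hle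
      _ = dist a c := by simp
      _ ≤ dist a p_c + dist p_c c := dist_triangle _ _ _
  · exact hle
  · calc dist a b + dist b c ≤ dist a c + dist c c := hle
      _ = dist a c := by simp
      _ ≤ dist a p_c + dist p_c c := dist_triangle _ _ _
end

section
/- Let C be a plane convex body in ℝ² and let T be a triangle contained in C with side lengths α, β, γ. Then there exists a triangle T' inscribed in C (all vertices on the boundary of C) with side lengths α' ≥ α, β' ≥ β, γ' ≥ γ in a suitable correspondence of sides. -/
open RealInnerProductSpace

/-- In the plane, for any two vectors `u v` there is a nonzero direction `d` making
nonnegative inner products with both. -/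
lemma exists_dir (u v : EuclideanSpace ℝ (Fin 2)) :
    ∃ d : EuclideanSpace ℝ (Fin 2), d ≠ 0 ∧ 0 ≤ ⟪u, d⟫ ∧ 0 ≤ ⟪v, d⟫ := by
  by_cases hu : u = 0
  · by_cases hv : v = 0
    · obtain ⟨d, hd⟩ := exists_ne (0 : EuclideanSpace ℝ (Fin 2))
      exact ⟨d, hd, by simp [hu], by simp [hv]⟩
    · exact ⟨v, hv, by simp [hu], real_inner_self_nonneg⟩
  · by_cases hv : v = 0
    · exact ⟨u, hu, real_inner_self_nonneg, by simp [hv]⟩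
    · by_cases hw : ‖v‖ • u + ‖u‖ • v = 0
      · -- u and v are antiparallel; take d orthogonal to u
        have hspan : (ℝ ∙ u)ᗮ ≠ ⊥ := by
          intro h
          have htop : (ℝ ∙ u) = ⊤ := Submodule.orthogonal_eq_bot_iff.mp h
          have h1 : Module.finrank ℝ (ℝ ∙ u) = 1 := finrank_span_singleton hu
          have h2 : Module.finrank ℝ (EuclideanSpace ℝ (Fin 2)) = 2 := by simp
          rw [htop, finrank_top, h2] at h1
          omega
        obtain ⟨d, hdmem, hd0⟩ := Submodule.ne_bot_iff _ |>.mp hspan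
        have hud : ⟪u, d⟫ = 0 :=
          (Submodule.mem_orthogonal _ _).mp hdmem u (Submodule.mem_span_singleton_self u)
        have h1 : ‖u‖ • v = -(‖v‖ • u) := by
          rw [add_comm, add_eq_zero_iff_eq_neg] at hw
          exact hw
        have hun : ‖u‖ ≠ 0 := norm_ne_zero_iff.mpr hu
        have h2 := congrArg (fun w => (‖u‖)⁻¹ • w) h1
        simp only [smul_smul, inv_mul_cancel₀ hun, one_smul, smul_neg] at h2
        have hvd : ⟪v, d⟫ = 0 := by
          rw [h2, inner_neg_left, real_inner_smul_left, hud, mul_zero, neg_zero]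
        exact ⟨d, hd0, hud.ge, hvd.ge⟩
      · refine ⟨‖v‖ • u + ‖u‖ • v, hw, ?_, ?_⟩
        · rw [inner_add_right, real_inner_smul_right, real_inner_smul_right]
          have h1 := neg_abs_le ⟪u, v⟫
          have h2 := abs_real_inner_le_norm u v
          have h3 : 0 ≤ ‖u‖ := norm_nonneg u
          have h4 : 0 ≤ ‖v‖ := norm_nonneg v
          have h5 : ⟪u, u⟫ = ‖u‖ ^ 2 := real_inner_self_eq_norm_sq u
          nlinarith
        · rw [inner_add_right, real_inner_smul_right, real_inner_smul_right]
          have h1 := neg_abs_le ⟪v, u⟫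
          have h2 := abs_real_inner_le_norm v u
          have h3 : 0 ≤ ‖u‖ := norm_nonneg u
          have h4 : 0 ≤ ‖v‖ := norm_nonneg v
          have h5 : ⟪v, v⟫ = ‖v‖ ^ 2 := real_inner_self_eq_norm_sq v
          nlinarith

/-- A point of a compact set can be pushed to the frontier without decreasing its
distance to two given points. -/
lemma push_to_frontier (C : Set (EuclideanSpace ℝ (Fin 2))) (hC₁ : IsCompact C)
    (x y z : EuclideanSpace ℝ (Fin 2)) (hx : x ∈ C) :
    ∃ x' ∈ frontier C, dist y x ≤ dist y x' ∧ dist z x ≤ dist z x' := by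
  obtain ⟨d, hd0, hdu, hdv⟩ := exists_dir (x - y) (x - z)
  have hdn : (0 : ℝ) < ‖d‖ := norm_pos_iff.mpr hd0
  set S : Set ℝ := Set.Ici 0 ∩ ((fun t : ℝ => x + t • d) ⁻¹' C) with hS
  have hS0 : (0 : ℝ) ∈ S := by simp [hS, hx]
  have hSne : S.Nonempty := ⟨0, hS0⟩
  have hcont : Continuous fun t : ℝ => x + t • d := by continuity
  have hSclosed : IsClosed S := isClosed_Ici.inter (hC₁.isClosed.preimage hcont)
  have hbdd : BddAbove S := by
    obtain ⟨R, hR⟩ := hC₁.isBounded.subset_closedBall 0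
    refine ⟨(R + ‖x‖) / ‖d‖, fun t ht => ?_⟩
    obtain ⟨ht0, htc⟩ := ht
    have h1 : ‖x + t • d‖ ≤ R := by
      have := hR htc
      simpa [Metric.mem_closedBall, dist_eq_norm] using this
    have h2 : ‖t • d‖ ≤ R + ‖x‖ := by
      have h := norm_sub_le (x + t • d) x
      rw [add_sub_cancel_left] at h
      linarith
    rw [norm_smul, Real.norm_eq_abs, abs_of_nonneg ht0] at h2
    rw [le_div_iff₀ hdn]
    exact h2
  set t₀ : ℝ := sSup S with ht₀def
  have ht₀S : t₀ ∈ S := hSclosed.csSup_mem hSne hbdd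
  obtain ⟨ht₀0, ht₀C⟩ := ht₀S
  refine ⟨x + t₀ • d, ?_, ?_, ?_⟩
  · rw [hC₁.isClosed.frontier_eq]
    refine ⟨ht₀C, fun hint => ?_⟩
    obtain ⟨ε, hε, hball⟩ := Metric.mem_nhds_iff.mp (mem_interior_iff_mem_nhds.mp hint)
    have ht₁gt : t₀ < t₀ + ε / (2 * ‖d‖) := lt_add_of_pos_right t₀ (by positivity)
    have ht₁S : t₀ + ε / (2 * ‖d‖) ∈ S := by
      refine ⟨le_of_lt (lt_of_le_of_lt ht₀0 ht₁gt), hball ?_⟩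
      simp only [Metric.mem_ball, dist_eq_norm]
      have heq : x + (t₀ + ε / (2 * ‖d‖)) • d - (x + t₀ • d) = (ε / (2 * ‖d‖)) • d := by
        rw [add_smul]; abel
      rw [heq, norm_smul, Real.norm_eq_abs, abs_of_nonneg (by positivity)]
      have hmul : ε / (2 * ‖d‖) * ‖d‖ = ε / 2 := by
        field_simp
      rw [hmul]
      linarith
    have := le_csSup hbdd ht₁S
    linarith
  · -- distance to y does not decrease
    have key : ‖x - y‖ ≤ ‖x - y + t₀ • d‖ := by
      have h2 : ‖x - y + t₀ • d‖ ^ 2 = ‖x - y‖ ^ 2 + 2 * ⟪x - y, t₀ • d⟫ + ‖t₀ • d‖ ^ 2 :=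
        norm_add_sq_real _ _
      have h3 : 0 ≤ ⟪x - y, t₀ • d⟫ := by
        rw [real_inner_smul_right]; exact mul_nonneg ht₀0 hdu
      have h4 : ‖x - y‖ ^ 2 ≤ ‖x - y + t₀ • d‖ ^ 2 := by nlinarith [sq_nonneg ‖t₀ • d‖]
      exact (pow_le_pow_iff_left₀ (norm_nonneg _) (norm_nonneg _) two_ne_zero).mp h4
    rw [dist_eq_norm, dist_eq_norm]
    have : y - (x + t₀ • d) = -(x - y + t₀ • d) := by abel
    rw [this, norm_neg, ← norm_neg (y - x)]
    have : -(y - x) = x - y := by abel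
    rw [this]
    exact key
  · have key : ‖x - z‖ ≤ ‖x - z + t₀ • d‖ := by
      have h2 : ‖x - z + t₀ • d‖ ^ 2 = ‖x - z‖ ^ 2 + 2 * ⟪x - z, t₀ • d⟫ + ‖t₀ • d‖ ^ 2 :=
        norm_add_sq_real _ _
      have h3 : 0 ≤ ⟪x - z, t₀ • d⟫ := by
        rw [real_inner_smul_right]; exact mul_nonneg ht₀0 hdv
      have h4 : ‖x - z‖ ^ 2 ≤ ‖x - z + t₀ • d‖ ^ 2 := by nlinarith [sq_nonneg ‖t₀ • d‖]
      exact (pow_le_pow_iff_left₀ (norm_nonneg _) (norm_nonneg _) two_ne_zero).mp h4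
    rw [dist_eq_norm, dist_eq_norm]
    have : z - (x + t₀ • d) = -(x - z + t₀ • d) := by abel
    rw [this, norm_neg, ← norm_neg (z - x)]
    have : -(z - x) = x - z := by abel
    rw [this]
    exact key

/-- A triangle contained in a plane convex body `C` can be replaced by a triangle inscribed
in `C` (vertices on the boundary) with corresponding side lengths at least as large. -/
theorem inscribe_triangle_without_decreasing_sides
    (C : Set (EuclideanSpace ℝ (Fin 2)))
    (hC₁ : IsCompact C) (hC₂ : Convex ℝ C) (hC₃ : (interior C).Nonempty)
    (x y z : EuclideanSpace ℝ (Fin 2)) (hx : x ∈ C) (hy : y ∈ C) (hz : z ∈ C) :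
    ∃ x' y' z' : EuclideanSpace ℝ (Fin 2),
      x' ∈ frontier C ∧ y' ∈ frontier C ∧ z' ∈ frontier C ∧
      dist x y ≤ dist x' y' ∧ dist y z ≤ dist y' z' ∧ dist x z ≤ dist x' z' := by
  obtain ⟨x', hx'f, hxy, hxz⟩ := push_to_frontier C hC₁ x y z hx
  obtain ⟨y', hy'f, hyx, hyz⟩ := push_to_frontier C hC₁ y x' z hy
  obtain ⟨z', hz'f, hzx, hzy⟩ := push_to_frontier C hC₁ z x' y' hz
  refine ⟨x', y', z', hx'f, hy'f, hz'f, ?_, ?_, ?_⟩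
  · calc dist x y = dist y x := dist_comm _ _
     _ ≤ dist y x' := hxy
     _ = dist x' y := dist_comm _ _
     _ ≤ dist x' y' := hyx
  · calc dist y z = dist z y := dist_comm _ _
     _ ≤ dist z y' := hyz
     _ = dist y' z := dist_comm _ _
     _ ≤ dist y' z' := hzy
  · calc dist x z = dist z x := dist_comm _ _
     _ ≤ dist z x' := hxz
     _ = dist x' z := dist_comm _ _
     _ ≤ dist x' z' := hzx
end

section
/- Let p = (0,0), a = (ω_a, θ_a), c = (ω_c, θ_c), p_a = (0, θ_a) ∈ ℝ² with ω_a, ω_c > 0, θ_a ≥ 0, θ_c − θ_a ≥ θ_c/2 > 0, and ω_c ≥ ω_a/2. Then 5 + dist(a, p_a) + dist(p_a, c) ≤ 5·dist(p, c) + dist(a, p) + dist(a, c) holds whenever it holds at c = w := (ω_a/2, θ_c) and c lies to the right of w (i.e. ω_c ≥ ω_a/2), because the directional derivative in direction (1,0) of the right-hand side minus the left-hand side is nonnegative. -/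
lemma dist_mk (v w : EuclideanSpace ℝ (Fin 2)) :
    dist v w = Real.sqrt ((v 0 - w 0)^2 + (v 1 - w 1)^2) := by
  rw [EuclideanSpace.dist_eq]
  simp [Fin.sum_univ_two, Real.dist_eq, sq_abs]

lemma sqrtD (k m : ℝ) (hm : 0 < m) (x : ℝ) :
    HasDerivAt (fun x => Real.sqrt ((x - k)^2 + m^2))
      ((x - k) / Real.sqrt ((x - k)^2 + m^2)) x := by
  have h0 : (x - k)^2 + m^2 ≠ 0 := by positivity
  have hs : 0 < Real.sqrt ((x - k)^2 + m^2) := Real.sqrt_pos.2 (by positivity)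
  have h1 : HasDerivAt (fun x : ℝ => (x - k)^2 + m^2) (2*(x-k)) x := by
    have := (((hasDerivAt_id x).sub_const k).pow 2).add_const (m^2)
    simpa using this
  have h2 := (Real.hasDerivAt_sqrt h0).comp x h1
  refine h2.congr_deriv ?_
  rw [div_mul_eq_mul_div, one_mul, mul_div_mul_left _ _ two_ne_zero]

lemma dkey (ωa b θc x : ℝ) (hωa : 0 < ωa) (hθc : 0 < θc) (hb : θc/2 ≤ b)
    (hx : ωa/2 ≤ x) :
    0 ≤ 5 * (x / Real.sqrt (x^2 + θc^2)) + (x - ωa) / Real.sqrt ((x - ωa)^2 + b^2)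
        - x / Real.sqrt (x^2 + b^2) := by
  have hb0 : 0 < b := lt_of_lt_of_le (by linarith) hb
  have hx0 : 0 < x := by linarith
  set r1 := Real.sqrt (x^2 + θc^2) with hr1d
  set r2 := Real.sqrt ((x - ωa)^2 + b^2) with hr2d
  set r3 := Real.sqrt (x^2 + b^2) with hr3d
  have hr1 : 0 < r1 := Real.sqrt_pos.2 (by positivity)
  have hr2 : 0 < r2 := Real.sqrt_pos.2 (by positivity)
  have hr3 : 0 < r3 := Real.sqrt_pos.2 (by positivity)
  have hr1s : r1^2 = x^2 + θc^2 := Real.sq_sqrt (by positivity)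
  have hr2s : r2^2 = (x - ωa)^2 + b^2 := Real.sq_sqrt (by positivity)
  have hr3s : r3^2 = x^2 + b^2 := Real.sq_sqrt (by positivity)
  -- step 1 : (x - ωa) * r3 + x * r2 ≥ 0
  have h1 : 0 ≤ (x - ωa) * r3 + x * r2 := by
    rcases le_or_gt 0 (x - ωa) with h | h
    · positivity
    · have expand : (x * r2)^2 - ((ωa - x) * r3)^2 = b^2 * (2*x - ωa) * ωa := by
        rw [mul_pow, mul_pow, hr2s, hr3s]; ring
      have h2x : 0 ≤ 2*x - ωa := by linarith
      have hsq : ((ωa - x) * r3)^2 ≤ (x * r2)^2 := by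
        nlinarith [mul_nonneg (mul_nonneg (sq_nonneg b) h2x) hωa.le]
      nlinarith [mul_pos hx0 hr2]
  -- step 2 : 2 * r1 ≤ 5 * r3
  have h2 : 2 * r1 ≤ 5 * r3 := by
    have : (2 * r1)^2 ≤ (5 * r3)^2 := by nlinarith
    nlinarith
  have key : 0 ≤ 5 * x * r2 * r3 + (x - ωa) * r1 * r3 - x * r1 * r2 := by
    nlinarith [mul_le_mul_of_nonneg_left h2 (mul_nonneg hx0.le hr2.le),
      mul_le_mul_of_nonneg_left h1 hr1.le]
  have heq : 5 * (x / r1) + (x - ωa) / r2 - x / r3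
      = (5 * x * r2 * r3 + (x - ωa) * r1 * r3 - x * r1 * r2) / (r1 * r2 * r3) := by
    field_simp
  rw [heq]
  exact div_nonneg key (by positivity)

lemma mono_lemma (ωa b θc : ℝ) (hωa : 0 < ωa) (hθc : 0 < θc) (hb : θc/2 ≤ b) :
    MonotoneOn (fun x => 5 * Real.sqrt (x^2 + θc^2) + Real.sqrt ((x - ωa)^2 + b^2)
      - Real.sqrt (x^2 + b^2)) (Set.Ici (ωa/2)) := by
  have hb0 : 0 < b := lt_of_lt_of_le (by linarith) hb
  have hd : ∀ x : ℝ, HasDerivAt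
      (fun x => 5 * Real.sqrt (x^2 + θc^2) + Real.sqrt ((x - ωa)^2 + b^2)
        - Real.sqrt (x^2 + b^2))
      (5 * (x / Real.sqrt (x^2 + θc^2)) + (x - ωa) / Real.sqrt ((x - ωa)^2 + b^2)
        - x / Real.sqrt (x^2 + b^2)) x := by
    intro x
    have d1 := sqrtD 0 θc hθc x
    have d2 := sqrtD ωa b hb0 x
    have d3 := sqrtD 0 b hb0 x
    simp only [sub_zero] at d1 d3
    exact ((d1.const_mul 5).add d2).sub d3
  apply monotoneOn_of_deriv_nonneg (convex_Ici _)
  · exact fun x _ => ((hd x).continuousAt).continuousWithinAt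
  · intro x _
    exact ((hd x).differentiableAt).differentiableWithinAt
  · intro x hx
    rw [(hd x).deriv]
    rw [interior_Ici] at hx
    exact dkey ωa b θc x hωa hθc hb (le_of_lt hx)

/-- The crucial Euclidean inequality: with `p = (0,0)`, `a = (ω_a, θ_a)`, `p_a = (0, θ_a)`,
`c = (ω_c, θ_c)` and `w = (ω_a/2, θ_c)`, if `ω_a, ω_c > 0`, `θ_a ≥ 0`,
`θ_c - θ_a ≥ θ_c/2 > 0`, `ω_c ≥ ω_a/2`, and the inequality
`5 + dist a p_a + dist p_a w ≤ 5·dist p w + dist a p + dist a w` holds at the base point `w`,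
then `5 + dist a p_a + dist p_a c ≤ 5·dist p c + dist a p + dist a c`. -/
theorem crucial_inequality_euclidean
    (ωa θa ωc θc : ℝ)
    (hωa : 0 < ωa) (hωc : 0 < ωc) (hθa : 0 ≤ θa)
    (hθc : 0 < θc / 2) (hhalf : θc / 2 ≤ θc - θa) (hw : ωa / 2 ≤ ωc)
    (p a p_a c w : EuclideanSpace ℝ (Fin 2))
    (hp : p = (!₂[0, 0] : EuclideanSpace ℝ (Fin 2)))
    (ha : a = (!₂[ωa, θa] : EuclideanSpace ℝ (Fin 2)))
    (hpa : p_a = (!₂[0, θa] : EuclideanSpace ℝ (Fin 2)))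
    (hc : c = (!₂[ωc, θc] : EuclideanSpace ℝ (Fin 2)))
    (hwdef : w = (!₂[ωa / 2, θc] : EuclideanSpace ℝ (Fin 2)))
    (hbase : 5 + dist a p_a + dist p_a w ≤ 5 * dist p w + dist a p + dist a w) :
    5 + dist a p_a + dist p_a c ≤ 5 * dist p c + dist a p + dist a c := by
  have hθc0 : 0 < θc := by linarith
  have key := mono_lemma ωa (θc - θa) θc hωa hθc0 hhalf
    (Set.self_mem_Ici) (Set.mem_Ici.2 hw) hw
  simp only [dist_mk] at hbase ⊢
  subst hp ha hpa hc hwdef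
  simp only [Matrix.cons_val_zero, Matrix.cons_val_one, Matrix.head_cons] at hbase ⊢
  have e1 : (0 - ωc)^2 + (0 - θc)^2 = ωc^2 + θc^2 := by ring
  have e2 : (ωa - ωc)^2 + (θa - θc)^2 = (ωc - ωa)^2 + (θc - θa)^2 := by ring
  have e3 : (0 - ωc)^2 + (θa - θc)^2 = ωc^2 + (θc - θa)^2 := by ring
  have e4 : (0 - ωa/2)^2 + (0 - θc)^2 = (ωa/2)^2 + θc^2 := by ring
  have e5 : (ωa - ωa/2)^2 + (θa - θc)^2 = (ωa/2 - ωa)^2 + (θc - θa)^2 := by ring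
  have e6 : (0 - ωa/2)^2 + (θa - θc)^2 = (ωa/2)^2 + (θc - θa)^2 := by ring
  rw [e1, e2, e3] 
  rw [e4, e5, e6] at hbase
  simp only at key
  linarith [key]
end

section
/- For all real θ_c, θ_a, ω_c with θ_c > θ_a ≥ θ_c/2·0, θ_c − θ_a ≥ θ_c/2 > 0 and ω_c > 0: (5·cosh(θ_c)·sinh(ω_c))/√(cosh²(θ_c)·cosh²(ω_c) − 1) − (2·cosh(θ_c − θ_a)·sinh(ω_c))/√(cosh²(θ_c − θ_a)·cosh²(ω_c) − 1) ≥ 0. -/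
set_option maxHeartbeats 1000000


/-- The key derivative inequality in the hyperbolic case: for `θ_a ≥ 0`,
`θ_c - θ_a ≥ θ_c/2 > 0` and `ω_c > 0`,
`5·cosh θ_c·sinh ω_c/√(cosh² θ_c·cosh² ω_c − 1)
  − 2·cosh(θ_c − θ_a)·sinh ω_c/√(cosh²(θ_c − θ_a)·cosh² ω_c − 1) ≥ 0`. -/
theorem key_derivative_inequality_hyperbolic
    (θc θa ωc : ℝ) (hθa : 0 ≤ θa) (hθc : 0 < θc / 2) (hhalf : θc / 2 ≤ θc - θa)
    (hωc : 0 < ωc) :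
    0 ≤ 5 * Real.cosh θc * Real.sinh ωc /
          Real.sqrt (Real.cosh θc ^ 2 * Real.cosh ωc ^ 2 - 1) -
        2 * Real.cosh (θc - θa) * Real.sinh ωc /
          Real.sqrt (Real.cosh (θc - θa) ^ 2 * Real.cosh ωc ^ 2 - 1) := by
  have hθcpos : 0 < θc := by linarith
  have htapos : 0 < θc - θa := lt_of_lt_of_le hθc hhalf
  set x := Real.cosh θc with hxdef
  set y := Real.cosh (θc - θa) with hydef
  set B := Real.cosh ωc with hBdef
  have hx1 : 1 < x := Real.one_lt_cosh.2 (ne_of_gt hθcpos)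
  have hy1 : 1 < y := Real.one_lt_cosh.2 (ne_of_gt htapos)
  have hB1 : 1 < B := Real.one_lt_cosh.2 (ne_of_gt hωc)
  have hyx : y ≤ x := by
    rw [hxdef, hydef]
    apply Real.cosh_le_cosh.2
    rw [abs_of_pos htapos, abs_of_pos hθcpos]; linarith
  have hhalfcosh : Real.cosh (θc / 2) ≤ y := by
    rw [hydef]
    apply Real.cosh_le_cosh.2
    rw [abs_of_pos hθc, abs_of_pos htapos]; exact hhalf
  have hx2y : x ≤ 2 * y ^ 2 - 1 := by
    have h2 : x = 2 * Real.cosh (θc / 2) ^ 2 - 1 := by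
      have ha := Real.cosh_two_mul (θc / 2)
      have hb := Real.cosh_sq (θc / 2)
      have hc : Real.cosh θc = Real.cosh (2 * (θc / 2)) := by rw [show 2 * (θc / 2) = θc by ring]
      rw [hxdef, hc]
      linarith
    have hc0 : 0 ≤ Real.cosh (θc / 2) := (Real.cosh_pos _).le
    nlinarith [sq_nonneg (Real.cosh (θc / 2) + y)]
  have hs : 0 < Real.sinh ωc := Real.sinh_pos_iff.2 hωc
  have hxB : 1 < x * B := by nlinarith
  have hyB : 1 < y * B := by nlinarith
  have hD1 : 0 < x ^ 2 * B ^ 2 - 1 := by nlinarith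
  have hD2 : 0 < y ^ 2 * B ^ 2 - 1 := by nlinarith
  have hsq1 : 0 < Real.sqrt (x ^ 2 * B ^ 2 - 1) := Real.sqrt_pos.2 hD1
  have hsq2 : 0 < Real.sqrt (y ^ 2 * B ^ 2 - 1) := Real.sqrt_pos.2 hD2
  rw [sub_nonneg, div_le_div_iff₀ hsq2 hsq1]
  have e1 : 2 * y * Real.sinh ωc * Real.sqrt (x ^ 2 * B ^ 2 - 1)
      = Real.sqrt ((2 * y * Real.sinh ωc) ^ 2 * (x ^ 2 * B ^ 2 - 1)) := by
    rw [Real.sqrt_mul (by positivity), Real.sqrt_sq (by positivity)]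
  have e2 : 5 * x * Real.sinh ωc * Real.sqrt (y ^ 2 * B ^ 2 - 1)
      = Real.sqrt ((5 * x * Real.sinh ωc) ^ 2 * (y ^ 2 * B ^ 2 - 1)) := by
    rw [Real.sqrt_mul (by positivity), Real.sqrt_sq (by positivity)]
  rw [e1, e2]
  apply Real.sqrt_le_sqrt
  have hkey : 4 * y ^ 2 * (x ^ 2 * B ^ 2 - 1) ≤ 25 * x ^ 2 * (y ^ 2 * B ^ 2 - 1) := by
    rcases le_or_gt (21 * y ^ 2) 25 with h | h
    · nlinarith [mul_nonneg (sub_nonneg.2 hx2y) (by nlinarith : (0:ℝ) ≤ 2 * y ^ 2 - 1 + x),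
        mul_nonneg (by nlinarith : (0:ℝ) ≤ y ^ 2 - 1) (by nlinarith : (0:ℝ) ≤ 84 * y ^ 4 - 100 * y ^ 2 + 25),
        mul_nonneg (mul_nonneg (by nlinarith : (0:ℝ) ≤ B ^ 2 - 1) (sq_nonneg x)) (sq_nonneg y)]
    · nlinarith [mul_nonneg (mul_nonneg (by nlinarith : (0:ℝ) ≤ B ^ 2 - 1) (sq_nonneg x)) (sq_nonneg y),
        mul_nonneg (by nlinarith : (0:ℝ) ≤ x ^ 2 - 1) (by nlinarith : (0:ℝ) ≤ 21 * y ^ 2 - 25)]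
  nlinarith [mul_le_mul_of_nonneg_left hkey (sq_nonneg (Real.sinh ωc))]
end
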